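/- Let A be a commutative ring and φ : A((t)) → A((t)) the continuous A-algebra endomorphism with φ(t) = ψ where ψ ∈ A((t))*, ν(ψ) ≥ 1. Suppose the image of ν(ψ) ∈ ℤ in A is not a zero divisor. Then φ is injective. -/

import Mathlib

open HahnSeries

/-- Continuity at `0` for the topology on `A((t))` with base of neighborhoods of zero
given by the submodules `tˡA[[t]]`, `l ∈ ℤ`. -/
def IsContMap {A : Type*} [CommRing A] (φ : LaurentSeries A → LaurentSeries A) : Prop :=
  ∀ d : ℤ, ∃ e : ℤ, ∀ f : LaurentSeries A,
    (∀ i : ℤ, i < e → f.coeff i = 0) → ∀ i : ℤ, i < d → (φ f).coeff i = 0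

namespace SubstInj

variable {A : Type*} [CommRing A]

/-- coefficient of `single d 1 * x`. -/
theorem single_one_mul_coeff (d i : ℤ) (x : LaurentSeries A) :
    ((single d (1 : A)) * x).coeff i = x.coeff (i - d) := by
  have := coeff_single_mul_add (r := (1 : A)) (x := x) (a := i - d) (b := d)
  rw [sub_add_cancel] at this
  rw [this, one_mul]

theorem ops_coeff_neg (F : PowerSeries A) {i : ℤ} (hi : i < 0) :
    (HahnSeries.ofPowerSeries ℤ A F).coeff i = 0 := by
  rw [ofPowerSeries_apply, embDomain_notin_range]
  rintro ⟨m, hm⟩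
  simp at hm
  omega

theorem ops_coeff_nonneg (F : PowerSeries A) {i : ℤ} (hi : 0 ≤ i) :
    (HahnSeries.ofPowerSeries ℤ A F).coeff i = PowerSeries.coeff i.toNat F := by
  have : i = ((i.toNat : ℕ) : ℤ) := (Int.toNat_of_nonneg hi).symm
  rw [this, ofPowerSeries_apply_coeff, Int.toNat_natCast]

/-- Representation of a Laurent series as `t^d * F`. -/
theorem rep_eq (f : LaurentSeries A) (d : ℤ) (h : ∀ i < d, f.coeff i = 0) :
    f = (single d (1 : A)) * (HahnSeries.ofPowerSeries ℤ A
      (PowerSeries.mk fun n => f.coeff (d + n))) := by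
  ext i
  rw [single_one_mul_coeff]
  rcases lt_or_ge i d with hi | hi
  · rw [ops_coeff_neg _ (by omega), h i hi]
  · rw [ops_coeff_nonneg _ (by omega), PowerSeries.coeff_mk]
    congr 1
    omega

theorem exists_lb (f : LaurentSeries A) (d0 : ℤ) : ∃ d ≤ d0, ∀ i < d, f.coeff i = 0 := by
  refine ⟨min f.order d0, min_le_right _ _, fun i hi => ?_⟩
  by_cases hf : f = 0
  · simp [hf]
  · exact coeff_eq_zero_of_lt_order (lt_of_lt_of_le hi (min_le_left _ _))

theorem exists_rep (f : LaurentSeries A) (d0 : ℤ) :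
    ∃ d ≤ d0, ∃ F : PowerSeries A, f = (single d (1 : A)) * HahnSeries.ofPowerSeries ℤ A F := by
  obtain ⟨d, hd, h⟩ := exists_lb f d0
  exact ⟨d, hd, _, rep_eq f d h⟩


/-- Formal derivative on Laurent series. -/
noncomputable def lsD (f : LaurentSeries A) : LaurentSeries A :=
  HahnSeries.ofSuppBddBelow (fun n : ℤ => (n + 1) • f.coeff (n + 1))
    (forallLTEqZero_supp_BddBelow _ (f.order - 1)
      (fun _ h_lt => by
        rw [HahnSeries.coeff_eq_zero_of_lt_order (by omega), smul_zero]))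

theorem lsD_coeff (f : LaurentSeries A) (n : ℤ) :
    (lsD f).coeff n = (n + 1) • f.coeff (n + 1) := rfl

theorem lsD_add (f g : LaurentSeries A) : lsD (f + g) = lsD f + lsD g := by
  ext n
  simp [lsD_coeff, smul_add]

theorem lsD_one : lsD (1 : LaurentSeries A) = 0 := by
  ext n
  rw [lsD_coeff, ← single_zero_one, HahnSeries.coeff_single]
  rcases eq_or_ne n (-1) with rfl | h
  · simp
  · rw [if_neg (by omega)]
    simp

theorem lsD_coe_zero : (lsD (0 : LaurentSeries A)) = 0 := by
  ext n; simp [lsD_coeff]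

/-- key computation: derivative of `t^d * F`. -/
theorem lsD_single_mul_ops (d : ℤ) (F : PowerSeries A) :
    lsD ((single d (1 : A)) * HahnSeries.ofPowerSeries ℤ A F) =
      (single (d - 1) (1 : A)) * HahnSeries.ofPowerSeries ℤ A
        (PowerSeries.C ((d : ℤ) : A) * F + PowerSeries.X * PowerSeries.derivative A F) := by
  ext i
  rw [lsD_coeff, single_one_mul_coeff, single_one_mul_coeff]
  have hsub : i - (d - 1) = i + 1 - d := by ring
  rw [hsub]
  rcases lt_or_ge (i + 1 - d) 0 with hn | hn
  · rw [ops_coeff_neg _ hn, ops_coeff_neg _ hn, smul_zero]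
  · rw [ops_coeff_nonneg _ hn, ops_coeff_nonneg _ hn]
    obtain ⟨m, hm⟩ : ∃ m : ℕ, (i + 1 - d).toNat = m := ⟨_, rfl⟩
    rw [hm]
    have him : i + 1 = d + m := by omega
    rw [map_add, PowerSeries.coeff_C_mul]
    rcases Nat.eq_zero_or_pos m with rfl | hmpos
    · rw [PowerSeries.coeff_zero_X_mul (PowerSeries.derivative A F)]
      rw [add_zero, zsmul_eq_mul]
      congr 1
      have : i + 1 = d := by omega
      rw [this]
    · obtain ⟨m', rfl⟩ : ∃ m', m = m' + 1 := ⟨m - 1, by omega⟩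
      rw [PowerSeries.coeff_succ_X_mul, PowerSeries.coeff_derivative]
      rw [zsmul_eq_mul]
      push_cast
      have hc : ((i : A) + 1) = ((d : A) + ((m' : A) + 1)) := by
        have := congrArg (fun z : ℤ => (z : A)) him
        push_cast at this
        linear_combination this
      rw [hc]
      ring

/-- Leibniz rule. -/
theorem lsD_mul (x y : LaurentSeries A) : lsD (x * y) = lsD x * y + x * lsD y := by
  obtain ⟨d, -, F, rfl⟩ := exists_rep x 0
  obtain ⟨e, -, G, rfl⟩ := exists_rep y 0
  have hxy : (single d (1 : A)) * HahnSeries.ofPowerSeries ℤ A F *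
      ((single e (1 : A)) * HahnSeries.ofPowerSeries ℤ A G) =
      (single (d + e) (1 : A)) * HahnSeries.ofPowerSeries ℤ A (F * G) := by
    rw [map_mul]
    rw [show (single (d + e) (1 : A)) = single d 1 * single e 1 by
      rw [single_mul_single, one_mul]]
    ring
  rw [hxy, lsD_single_mul_ops, lsD_single_mul_ops, lsD_single_mul_ops]
  have h1 : (single (d + e - 1) (1 : A)) = single (d - 1) 1 * single e 1 := by
    rw [single_mul_single, one_mul]; congr 1; ring
  have h2 : (single (d + e - 1) (1 : A)) = single d 1 * single (e - 1) 1 := by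
    rw [single_mul_single, one_mul]; congr 1; ring
  have hC : PowerSeries.C (((d + e : ℤ)) : A) =
      PowerSeries.C ((d : ℤ) : A) + PowerSeries.C ((e : ℤ) : A) := by
    rw [← map_add]
    congr 1
    push_cast
    ring
  have hder : PowerSeries.derivative A (F * G) =
      F * PowerSeries.derivative A G + G * PowerSeries.derivative A F := by
    have := (PowerSeries.derivative A).leibniz F G
    simpa [smul_eq_mul] using this
  calc (single (d + e - 1) (1:A)) * HahnSeries.ofPowerSeries ℤ A
        (PowerSeries.C (((d + e : ℤ)) : A) * (F * G) +
          PowerSeries.X * PowerSeries.derivative A (F * G))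
      = (single (d + e - 1) (1:A)) * HahnSeries.ofPowerSeries ℤ A
        ((PowerSeries.C ((d : ℤ) : A) * F + PowerSeries.X * PowerSeries.derivative A F) * G
          + F * (PowerSeries.C ((e : ℤ) : A) * G
            + PowerSeries.X * PowerSeries.derivative A G)) := by
        rw [hC, hder]; congr 1; congr 1; ring
    _ = _ := by
        rw [map_add]
        rw [mul_add]
        congr 1
        · rw [map_mul, h1]; ring
        · rw [map_mul, h2]; ring


theorem map_derivative {R S : Type*} [CommRing R] [CommRing S] (π : R →+* S)
    (F : PowerSeries R) :
    PowerSeries.map π (PowerSeries.derivative R F) =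
      PowerSeries.derivative S (PowerSeries.map π F) := by
  ext n
  simp [PowerSeries.coeff_map, PowerSeries.coeff_derivative]

/-- Universal-coefficients lemma in power series form. -/
theorem PU (k c : ℕ) (d : ℤ) (h : d * ((k : ℤ) + 1) = -(c : ℤ)) (F : PowerSeries A) :
    PowerSeries.coeff c (F ^ k * (PowerSeries.C ((d : ℤ) : A) * F +
      PowerSeries.X * PowerSeries.derivative A F)) = 0 := by
  set R := MvPolynomial ℕ ℤ with hR
  set Φ : PowerSeries R := PowerSeries.mk fun n => MvPolynomial.X n with hΦdef
  have hker : PowerSeries.coeff c (Φ ^ k * (PowerSeries.C ((d : ℤ) : R) * Φ +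
      PowerSeries.X * PowerSeries.derivative R Φ)) = 0 := by
    set r := PowerSeries.coeff c (Φ ^ k * (PowerSeries.C ((d : ℤ) : R) * Φ +
      PowerSeries.X * PowerSeries.derivative R Φ)) with hr
    have e1 : (PowerSeries.C (((k : ℕ) + 1 : ℕ) : R)) *
        (Φ ^ k * (PowerSeries.C ((d : ℤ) : R) * Φ +
          PowerSeries.X * PowerSeries.derivative R Φ)) =
        PowerSeries.C ((d * ((k : ℤ) + 1) : ℤ) : R) * Φ ^ (k + 1) +
          PowerSeries.X * PowerSeries.derivative R (Φ ^ (k + 1)) := by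
      have hd : PowerSeries.derivative R (Φ ^ (k + 1)) =
          ((k + 1 : ℕ) : PowerSeries R) * (Φ ^ k * PowerSeries.derivative R Φ) := by
        have := Derivation.leibniz_pow (PowerSeries.derivative R) (a := Φ) (k + 1)
        rw [this]
        simp only [Nat.add_sub_cancel, smul_eq_mul, nsmul_eq_mul]
      rw [hd]
      have hcast1 : ((d * ((k : ℤ) + 1) : ℤ) : R) = ((d : ℤ) : R) * (((k : ℕ) + 1 : ℕ) : R) := by
        push_cast; ring
      have hcast2 : (((k : ℕ) + 1 : ℕ) : PowerSeries R) =
          PowerSeries.C (((k : ℕ) + 1 : ℕ) : R) := by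
        rw [map_natCast (PowerSeries.C (R := R))]
      rw [hcast1, hcast2, map_mul, pow_succ]
      ring
    have hk : (((k : ℕ) + 1 : ℕ) : R) * r = 0 := by
      rw [hr, ← PowerSeries.coeff_C_mul, e1, map_add, PowerSeries.coeff_C_mul]
      rcases Nat.eq_zero_or_pos c with rfl | hc
      · have hd0 : d = 0 := by
          have h0 : d * ((k : ℤ) + 1) = 0 := by omega
          rcases mul_eq_zero.mp h0 with h1 | h1
          · exact h1
          · omega
        subst hd0
        simp
      · obtain ⟨c', rfl⟩ : ∃ c', c = c' + 1 := ⟨c - 1, by omega⟩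
        rw [PowerSeries.coeff_succ_X_mul, PowerSeries.coeff_derivative]
        have : ((d * ((k : ℤ) + 1) : ℤ) : R) = -(((c' : ℕ) + 1 : ℕ) : R) := by
          rw [h]; push_cast; ring
        rw [this]
        push_cast
        ring
    have hne : (((k : ℕ) + 1 : ℕ) : R) ≠ 0 := by
      exact_mod_cast Nat.succ_ne_zero k
    exact (mul_eq_zero.mp hk).resolve_left hne
  let π : R →+* A := MvPolynomial.eval₂Hom (Int.castRingHom A) fun n => PowerSeries.coeff n F
  have hΦ : PowerSeries.map π Φ = F := by
    ext n
    rw [PowerSeries.coeff_map, hΦdef, PowerSeries.coeff_mk]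
    exact MvPolynomial.eval₂Hom_X' _ _ n
  have himg : F ^ k * (PowerSeries.C ((d : ℤ) : A) * F +
      PowerSeries.X * PowerSeries.derivative A F) =
      PowerSeries.map π (Φ ^ k * (PowerSeries.C ((d : ℤ) : R) * Φ +
        PowerSeries.X * PowerSeries.derivative R Φ)) := by
    rw [map_mul, map_pow, map_add, map_mul, map_mul, hΦ, PowerSeries.map_C,
      PowerSeries.map_X, map_derivative, hΦ]
    simp [map_intCast]
  rw [himg, PowerSeries.coeff_map, hker, map_zero]

/-- The central residue lemma: `res (f^k * f') = 0` for all `f` and `k ∈ ℕ`. -/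
theorem res_pow_mul_lsD (f : LaurentSeries A) (k : ℕ) : (f ^ k * lsD f).coeff (-1) = 0 := by
  obtain ⟨d, -, F, rfl⟩ := exists_rep f 0
  rw [lsD_single_mul_ops]
  have hpow : ((single d (1 : A)) * HahnSeries.ofPowerSeries ℤ A F) ^ k =
      single ((k : ℤ) * d) 1 * HahnSeries.ofPowerSeries ℤ A (F ^ k) := by
    rw [mul_pow, single_pow, one_pow, map_pow, nsmul_eq_mul]
  rw [hpow]
  have hprod : single ((k : ℤ) * d) (1 : A) * HahnSeries.ofPowerSeries ℤ A (F ^ k) *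
      ((single (d - 1) (1 : A)) * HahnSeries.ofPowerSeries ℤ A
        (PowerSeries.C ((d : ℤ) : A) * F + PowerSeries.X * PowerSeries.derivative A F)) =
      single ((k : ℤ) * d + (d - 1)) 1 * HahnSeries.ofPowerSeries ℤ A
        (F ^ k * (PowerSeries.C ((d : ℤ) : A) * F +
          PowerSeries.X * PowerSeries.derivative A F)) := by
    rw [map_mul, show (single ((k : ℤ) * d + (d - 1)) (1 : A)) =
      single ((k : ℤ) * d) 1 * single (d - 1) 1 by rw [single_mul_single, one_mul]]
    ring
  rw [hprod, single_one_mul_coeff]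
  rcases lt_or_ge (-1 - ((k : ℤ) * d + (d - 1))) 0 with hn | hn
  · exact ops_coeff_neg _ hn
  · rw [ops_coeff_nonneg _ hn]
    have htn : (((-1 - ((k : ℤ) * d + (d - 1))).toNat : ℕ) : ℤ) =
        -1 - ((k : ℤ) * d + (d - 1)) := Int.toNat_of_nonneg hn
    exact PU k (-1 - ((k : ℤ) * d + (d - 1))).toNat d (by rw [htn]; ring) F

theorem coeff_mul_eq_zero_of_lb {x y : LaurentSeries A} {a b : ℤ}
    (hx : ∀ i < a, x.coeff i = 0) (hy : ∀ i < b, y.coeff i = 0) :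
    ∀ i < a + b, (x * y).coeff i = 0 := by
  intro i hi
  rw [rep_eq x a hx, rep_eq y b hy]
  rw [show (single a (1:A)) * HahnSeries.ofPowerSeries ℤ A (PowerSeries.mk fun n => x.coeff (a + n))
      * ((single b (1:A)) * HahnSeries.ofPowerSeries ℤ A (PowerSeries.mk fun n => y.coeff (b + n)))
      = single (a + b) 1 * ((HahnSeries.ofPowerSeries ℤ A (PowerSeries.mk fun n => x.coeff (a + n)))
        * HahnSeries.ofPowerSeries ℤ A (PowerSeries.mk fun n => y.coeff (b + n))) by
    rw [show (single (a + b) (1:A)) = single a 1 * single b 1 by rw [single_mul_single, one_mul]]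
    ring]
  rw [← map_mul, single_one_mul_coeff]
  exact ops_coeff_neg _ (by omega)

theorem lsD_single (a : ℤ) (r : A) : lsD (single a r) = single (a - 1) ((a : A) * r) := by
  ext i
  rw [lsD_coeff, HahnSeries.coeff_single, HahnSeries.coeff_single]
  rcases eq_or_ne i (a - 1) with rfl | h
  · rw [if_pos (by ring), if_pos rfl, zsmul_eq_mul]
    congr 2
    omega
  · rw [if_neg (by omega), if_neg h, smul_zero]

theorem lsD_ops_lb (F : PowerSeries A) : ∀ i < 0,
    (lsD (HahnSeries.ofPowerSeries ℤ A F)).coeff i = 0 := by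
  intro i hi
  rw [lsD_coeff]
  rcases eq_or_ne i (-1) with rfl | h
  · simp
  · rw [ops_coeff_neg _ (by omega), smul_zero]

theorem lsD_neg (x : LaurentSeries A) : lsD (-x) = -lsD x := by
  ext n
  rw [lsD_coeff, HahnSeries.coeff_neg, HahnSeries.coeff_neg, lsD_coeff, smul_neg]

theorem coeff_sum {ι : Type*} (s : Finset ι) (f : ι → LaurentSeries A) (j : ℤ) :
    (∑ i ∈ s, f i).coeff j = ∑ i ∈ s, (f i).coeff j := by
  classical
  induction s using Finset.cons_induction with
  | empty => simp
  | cons i s hi ih => rw [Finset.sum_cons, Finset.sum_cons, HahnSeries.coeff_add, ih]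

/-- The main residue computation: `res(ψ^j ψ') = ν δ_{j,-1}`. -/
theorem res_zpow (ψ : LaurentSeries A) (hψ : IsUnit ψ) (ν : ℤ)
    (hunit : IsUnit (ψ.coeff ν)) (hnil : ∀ l : ℤ, l < ν → IsNilpotent (ψ.coeff l)) (j : ℤ) :
    ((↑(hψ.unit ^ j) : LaurentSeries A) * lsD ψ).coeff (-1)
      = if j = -1 then ((ν : ℤ) : A) else 0 := by
  have huspec : (↑hψ.unit : LaurentSeries A) = ψ := hψ.unit_spec
  rcases lt_trichotomy j (-1) with hj | rfl | hj
  · -- j ≤ -2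
    rw [if_neg (by omega)]
    set q : LaurentSeries A := (↑(hψ.unit⁻¹) : LaurentSeries A) with hqdef
    have hinv : ψ * q = 1 := by
      have h := Units.mul_inv hψ.unit
      rw [huspec] at h
      exact h
    have hDrel : lsD ψ * q + ψ * lsD q = 0 := by
      rw [← lsD_mul, hinv, lsD_one]
    obtain ⟨n, hn⟩ : ∃ n : ℕ, j = -((n : ℤ) + 2) := ⟨(-j - 2).toNat, by omega⟩
    have hz : (↑(hψ.unit ^ j) : LaurentSeries A) = q ^ (n + 2) := by
      rw [hn, show (-((n : ℤ) + 2)) = -(((n + 2 : ℕ) : ℤ)) by push_cast; ring,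
        zpow_neg, zpow_natCast, ← inv_pow, hqdef]
      rw [Units.val_pow_eq_pow_val]
    rw [hz]
    have key : q ^ (n + 2) * lsD ψ = -(q ^ n * lsD q) := by
      have h1 : q ^ (n + 2) * lsD ψ = q ^ (n + 1) * (lsD ψ * q) := by ring
      have h2 : lsD ψ * q = -(ψ * lsD q) := by linear_combination hDrel
      rw [h1, h2]
      have h3 : q ^ (n + 1) * -(ψ * lsD q) = -((ψ * q) * (q ^ n * lsD q)) := by ring
      rw [h3, hinv, one_mul]
    rw [key, HahnSeries.coeff_neg, res_pow_mul_lsD, neg_zero]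
  · -- j = -1 : the main case
    rw [if_pos rfl]
    obtain ⟨e, he, hlb⟩ := exists_lb ψ ν
    set U : PowerSeries A := PowerSeries.mk fun n => ψ.coeff (ν + n) with hUdef
    set K : ℕ := (ν - e).toNat with hKdef
    set nn : LaurentSeries A :=
      ∑ l ∈ Finset.range K, single (e + l) (ψ.coeff (e + l)) with hnndef
    have hnncoeff : ∀ i : ℤ, nn.coeff i = if e ≤ i ∧ i < ν then ψ.coeff i else 0 := by
      intro i
      rw [hnndef, coeff_sum]
      by_cases hi : e ≤ i ∧ i < ν
      · rw [if_pos hi]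
        rw [Finset.sum_eq_single (i - e).toNat]
        · rw [HahnSeries.coeff_single, if_pos (by omega)]
          congr 1
          omega
        · intro l _ hl
          rw [HahnSeries.coeff_single, if_neg (by omega)]
        · intro hmem
          exfalso
          exact hmem (Finset.mem_range.mpr (by omega))
      · rw [if_neg hi]
        apply Finset.sum_eq_zero
        intro l hl
        rw [Finset.mem_range] at hl
        rw [HahnSeries.coeff_single]
        rcases eq_or_ne i (e + l) with rfl | h
        · rw [if_pos rfl]
          rcases not_and_or.mp hi with h' | h'
          · omega
          · exact hlb _ (by omega)
        · rw [if_neg h]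
    set P1 : LaurentSeries A := single ν 1 with hP1def
    set P2 : LaurentSeries A := HahnSeries.ofPowerSeries ℤ A U with hP2def
    have hdecomp : ψ = P1 * P2 + nn := by
      ext i
      rw [HahnSeries.coeff_add, hnncoeff, hP1def, hP2def, single_one_mul_coeff]
      rcases lt_or_ge i ν with hi | hi
      · rw [ops_coeff_neg _ (by omega)]
        rcases lt_or_ge i e with hie | hie
        · rw [if_neg (by omega), hlb i hie, add_zero]
        · rw [if_pos ⟨hie, hi⟩, zero_add]
      · rw [ops_coeff_nonneg _ (by omega), if_neg (by omega), add_zero, hUdef,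
          PowerSeries.coeff_mk]
        congr 1
        omega
    have hUunit : IsUnit U := by
      rw [PowerSeries.isUnit_iff_constantCoeff]
      have : PowerSeries.constantCoeff U = ψ.coeff ν := by
        rw [hUdef]
        have := PowerSeries.coeff_mk 0 (fun n => ψ.coeff (ν + n))
        simpa using this
      rw [this]
      exact hunit
    obtain ⟨V, hUV⟩ : ∃ V, U * V = 1 := by
      obtain ⟨u, hu⟩ := hUunit
      exact ⟨↑u⁻¹, by rw [← hu, Units.mul_inv]⟩
    set Q1 : LaurentSeries A := single (-ν) 1 with hQ1def
    set Q2 : LaurentSeries A := HahnSeries.ofPowerSeries ℤ A V with hQ2def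
    have hP1Q1 : P1 * Q1 = 1 := by
      rw [hP1def, hQ1def, single_mul_single, add_neg_cancel, one_mul, single_zero_one]
    have hP2Q2 : P2 * Q2 = 1 := by
      rw [hP2def, hQ2def, ← map_mul, hUV, map_one]
    have hnilnn : IsNilpotent nn := by
      rw [hnndef]
      apply isNilpotent_sum
      intro l hl
      rw [Finset.mem_range] at hl
      obtain ⟨M, hM⟩ := hnil (e + l) (by omega)
      exact ⟨M, by rw [single_pow, hM, single_eq_zero]⟩
    set m : LaurentSeries A := Q1 * Q2 * nn with hmdef
    have hm : IsNilpotent m := (Commute.all _ _).isNilpotent_mul_left hnilnn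
    obtain ⟨KK, hKK⟩ := hm
    have hψfact : ψ = P1 * P2 * (1 + m) := by
      rw [hdecomp, hmdef]
      have : P1 * P2 * (1 + Q1 * Q2 * nn)
          = P1 * P2 + (P1 * Q1) * (P2 * Q2) * nn := by ring
      rw [this, hP1Q1, hP2Q2, one_mul, one_mul]
    set Q3 : LaurentSeries A := ∑ k ∈ Finset.range KK, (-m) ^ k with hQ3def
    have hP3Q3 : (1 + m) * Q3 = 1 := by
      have hgeom := geom_sum_mul (-m) KK
      have hmz : (-m) ^ KK = 0 := by
        have h1 : (-m) ^ KK = (-1) ^ KK * m ^ KK := by ring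
        rw [h1, hKK, mul_zero]
      rw [hQ3def]
      linear_combination -hgeom - hmz
    have hinv : ψ * (Q1 * Q2 * Q3) = 1 := by
      rw [hψfact]
      have : P1 * P2 * (1 + m) * (Q1 * Q2 * Q3)
          = (P1 * Q1) * (P2 * Q2) * ((1 + m) * Q3) := by ring
      rw [this, hP1Q1, hP2Q2, hP3Q3, one_mul, one_mul]
    have hzinv : (↑(hψ.unit ^ (-1 : ℤ)) : LaurentSeries A) = Q1 * Q2 * Q3 := by
      rw [zpow_neg_one]
      exact Units.inv_eq_of_mul_eq_one_right (by rw [huspec]; exact hinv)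
    rw [hzinv]
    -- expand the derivative
    have hDψ : lsD ψ = lsD P1 * P2 * (1 + m) + P1 * lsD P2 * (1 + m)
        + P1 * P2 * lsD m := by
      rw [hψfact, lsD_mul, lsD_mul]
      have : lsD (1 + m) = lsD m := by
        rw [lsD_add, lsD_one, zero_add]
      rw [this]
      ring
    have hE : Q1 * Q2 * Q3 * lsD ψ = lsD P1 * Q1 + lsD P2 * Q2 + lsD m * Q3 := by
      rw [hDψ]
      have expand : Q1 * Q2 * Q3 * (lsD P1 * P2 * (1 + m) + P1 * lsD P2 * (1 + m)
          + P1 * P2 * lsD m)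
          = (lsD P1 * Q1) * ((P2 * Q2) * ((1 + m) * Q3))
            + (lsD P2 * Q2) * ((P1 * Q1) * ((1 + m) * Q3))
            + (lsD m * Q3) * ((P1 * Q1) * (P2 * Q2)) := by ring
      rw [expand, hP1Q1, hP2Q2, hP3Q3]
      ring
    rw [hE, HahnSeries.coeff_add, HahnSeries.coeff_add]
    have r1 : (lsD P1 * Q1).coeff (-1) = ((ν : ℤ) : A) := by
      rw [hP1def, hQ1def, lsD_single, single_mul_single, mul_one, mul_one]
      rw [show ν - 1 + -ν = (-1 : ℤ) by ring, coeff_single_same]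
    have r2 : (lsD P2 * Q2).coeff (-1) = 0 := by
      apply coeff_mul_eq_zero_of_lb (a := 0) (b := 0)
        (lsD_ops_lb U) (fun i hi => ops_coeff_neg _ hi)
      norm_num
    have r3 : (lsD m * Q3).coeff (-1) = 0 := by
      rw [hQ3def, Finset.mul_sum, coeff_sum]
      apply Finset.sum_eq_zero
      intro k _
      have h1 : lsD m * (-m) ^ k = -((-m) ^ k * lsD (-m)) := by
        rw [lsD_neg]
        ring
      rw [h1, HahnSeries.coeff_neg, res_pow_mul_lsD, neg_zero]
    rw [r1, r2, r3, add_zero, add_zero]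
  · -- j ≥ 0
    rw [if_neg (by omega)]
    obtain ⟨n, rfl⟩ : ∃ n : ℕ, j = (n : ℤ) := ⟨j.toNat, by omega⟩
    rw [zpow_natCast, Units.val_pow_eq_pow_val, huspec]
    exact res_pow_mul_lsD ψ n

theorem single_c_mul_coeff (d i : ℤ) (c : A) (x : LaurentSeries A) :
    ((single d c) * x).coeff i = c * x.coeff (i - d) := by
  have := coeff_single_mul_add (r := c) (x := x) (a := i - d) (b := d)
  rw [sub_add_cancel] at this
  rw [this]

end SubstInj

open SubstInj in
theorem substitution_injective' {A : Type*} [CommRing A]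
    (ψ : LaurentSeries A) (hψ : IsUnit ψ) (ν : ℤ)
    (hunit : IsUnit (ψ.coeff ν)) (hnil : ∀ l : ℤ, l < ν → IsNilpotent (ψ.coeff l))
    (hreg : ∀ a : A, (ν : A) * a = 0 → a = 0)
    (φ : LaurentSeries A →ₐ[A] LaurentSeries A) (hcont : IsContMap ⇑φ)
    (hφt : φ (HahnSeries.single 1 1) = ψ) :
    Function.Injective ⇑φ := by
  have hzero : ∀ f : LaurentSeries A, φ f = 0 → f = 0 := by
    intro f hf
    -- φ of single l 1
    have hsingle_pow : ∀ n : ℕ, (single (1 : ℤ) (1 : A)) ^ n = single ((n : ℤ)) 1 := by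
      intro n
      rw [HahnSeries.single_pow, one_pow, nsmul_eq_mul, mul_one]
    have hpos : ∀ n : ℕ, φ (single ((n : ℤ)) 1) = ↑(hψ.unit ^ ((n : ℤ))) := by
      intro n
      rw [← hsingle_pow, map_pow, hφt, zpow_natCast, Units.val_pow_eq_pow_val, hψ.unit_spec]
    have hall : ∀ l : ℤ, φ (single l 1) = ↑(hψ.unit ^ l) := by
      intro l
      rcases le_or_gt 0 l with hl | hl
      · obtain ⟨n, rfl⟩ : ∃ n : ℕ, l = (n : ℤ) := ⟨l.toNat, by omega⟩
        exact hpos n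
      · obtain ⟨n, rfl⟩ : ∃ n : ℕ, l = -((n : ℤ)) := ⟨(-l).toNat, by omega⟩
        have h1 : single (-((n : ℤ))) (1 : A) * single ((n : ℤ)) 1 = 1 := by
          rw [single_mul_single, one_mul, show (-((n : ℤ)) + n) = 0 by ring, single_zero_one]
        have h4 : φ (single ((n : ℤ)) 1) * ↑(hψ.unit ^ (-((n : ℤ)))) = 1 := by
          calc φ (single ((n : ℤ)) 1) * ↑(hψ.unit ^ (-((n : ℤ))))
              = ↑(hψ.unit ^ ((n : ℤ)) * hψ.unit ^ (-((n : ℤ)))) := by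
                rw [hpos n, Units.val_mul]
            _ = 1 := by
                rw [← zpow_add, show ((n : ℤ) + -((n : ℤ))) = 0 by ring, zpow_zero,
                  Units.val_one]
        calc φ (single (-((n : ℤ))) 1)
            = φ (single (-((n : ℤ))) 1) * (φ (single ((n : ℤ)) 1)
                * ↑(hψ.unit ^ (-((n : ℤ))))) := by rw [h4, mul_one]
          _ = (φ (single (-((n : ℤ))) 1) * φ (single ((n : ℤ)) 1))
                * ↑(hψ.unit ^ (-((n : ℤ)))) := by ring
          _ = ↑(hψ.unit ^ (-((n : ℤ)))) := by rw [← map_mul, h1, map_one, one_mul]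
    suffices hco : ∀ k : ℤ, f.coeff k = 0 by
      ext k
      rw [hco k, HahnSeries.coeff_zero]
    intro k
    apply hreg
    set y : LaurentSeries A := (↑(hψ.unit ^ (-k - 1)) : LaurentSeries A) * lsD ψ with hydef
    -- residue of `φ(single i c) * y`
    have res_y_single : ∀ (i : ℤ) (c : A),
        (φ (single i c) * y).coeff (-1) = c * (if i = k then ((ν : ℤ) : A) else 0) := by
      intro i c
      have hsplit : (single i c : LaurentSeries A) = single 0 c * single i 1 := by
        rw [single_mul_single, zero_add, mul_one]
      have hCmap : φ (single 0 c) = single 0 c := by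
        have halg : (single (0 : ℤ) c : LaurentSeries A) = algebraMap A (LaurentSeries A) c := by
          have h : algebraMap A (LaurentSeries A) c
              = HahnSeries.ofPowerSeries ℤ A (PowerSeries.C c) := rfl
          rw [h, ofPowerSeries_C]
          rfl
        rw [halg, φ.commutes, ← halg]
      rw [hsplit, map_mul, hCmap, hall i, mul_assoc, single_c_mul_coeff, sub_zero]
      have hassoc : (↑(hψ.unit ^ i) : LaurentSeries A) * y
          = ↑(hψ.unit ^ (i + (-k - 1))) * lsD ψ := by
        rw [hydef, ← mul_assoc, ← Units.val_mul, ← zpow_add]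
      rw [hassoc, res_zpow ψ hψ ν hunit hnil]
      by_cases hik : i = k
      · rw [if_pos (by omega), if_pos hik]
      · rw [if_neg (by omega), if_neg hik]
    obtain ⟨ey, hey⟩ : ∃ ey : ℤ, ∀ i < ey, y.coeff i = 0 := by
      obtain ⟨d, -, h⟩ := exists_lb y 0
      exact ⟨d, h⟩
    obtain ⟨e₀, hcont₀⟩ := hcont (-ey)
    obtain ⟨e, he, hflb⟩ := exists_lb f (min e₀ k)
    set N : ℤ := max e₀ (k + 1) with hNdef
    have heN : e ≤ N := by omega
    set KN : ℕ := (N - e).toNat with hKNdef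
    set trunc : LaurentSeries A :=
      ∑ l ∈ Finset.range KN, single (e + (l : ℤ)) (f.coeff (e + l)) with htruncdef
    have htrunccoeff : ∀ i : ℤ, trunc.coeff i = if e ≤ i ∧ i < N then f.coeff i else 0 := by
      intro i
      rw [htruncdef, SubstInj.coeff_sum]
      by_cases hi : e ≤ i ∧ i < N
      · rw [if_pos hi]
        rw [Finset.sum_eq_single (i - e).toNat]
        · rw [HahnSeries.coeff_single, if_pos (by omega)]
          congr 1
          omega
        · intro l _ hl
          rw [HahnSeries.coeff_single, if_neg (by omega)]
        · intro hmem
          exfalso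
          exact hmem (Finset.mem_range.mpr (by omega))
      · rw [if_neg hi]
        apply Finset.sum_eq_zero
        intro l hl
        rw [Finset.mem_range] at hl
        rw [HahnSeries.coeff_single]
        rcases eq_or_ne i (e + l) with rfl | h
        · rw [if_pos rfl]
          rcases not_and_or.mp hi with h' | h'
          · omega
          · exact hflb _ (by omega)
        · rw [if_neg h]
    have htail : ∀ i < e₀, (f - trunc).coeff i = 0 := by
      intro i hi
      rw [HahnSeries.coeff_sub, htrunccoeff]
      rcases lt_or_ge i e with hie | hie
      · rw [if_neg (by omega), hflb i hie, sub_zero]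
      · rw [if_pos (by omega), sub_self]
    -- the tail contributes nothing to the residue
    have htailres : (φ (f - trunc) * y).coeff (-1) = 0 := by
      have hφtail : ∀ i < -ey, (φ (f - trunc)).coeff i = 0 := hcont₀ _ htail
      exact coeff_mul_eq_zero_of_lb hφtail hey (-1) (by omega)
    have htruncres : (φ trunc * y).coeff (-1) = 0 := by
      have h5 : φ trunc = -(φ (f - trunc)) := by
        rw [map_sub, hf]
        ring
      have h6 : φ trunc * y = -(φ (f - trunc) * y) := by
        rw [h5]
        ring
      rw [h6, HahnSeries.coeff_neg, htailres, neg_zero]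
    -- compute the residue of the truncation explicitly
    have hsum : (φ trunc * y).coeff (-1) = f.coeff k * ((ν : ℤ) : A) := by
      rw [htruncdef, map_sum, Finset.sum_mul, SubstInj.coeff_sum]
      have hterm : ∀ l ∈ Finset.range KN,
          (φ (single (e + (l : ℤ)) (f.coeff (e + l))) * y).coeff (-1)
            = f.coeff (e + l) * (if e + (l : ℤ) = k then ((ν : ℤ) : A) else 0) := by
        intro l _
        exact res_y_single (e + l) (f.coeff (e + l))
      rw [Finset.sum_congr rfl hterm]
      rw [Finset.sum_eq_single (k - e).toNat]
      · rw [if_pos (by omega)]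
        congr 2
        omega
      · intro l _ hl
        rw [if_neg (by omega), mul_zero]
      · intro hmem
        exfalso
        exact hmem (Finset.mem_range.mpr (by omega))
    rw [htruncres] at hsum
    rw [mul_comm]
    exact hsum.symm
  intro a b hab
  have h := hzero (a - b) (by rw [map_sub, hab, sub_self])
  rwa [sub_eq_zero] at h

/-- Let `φ` be the continuous `A`-algebra endomorphism of `A((t))` with `φ(t) = ψ`,
where `ψ ∈ A((t))*` has `ν(ψ) = ν ≥ 1`. If the image of `ν ∈ ℤ` in `A` is not a zero
divisor, then `φ` is injective. -/
theorem substitution_injective {A : Type*} [CommRing A]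
    (ψ : LaurentSeries A) (hψ : IsUnit ψ) (ν : ℤ) (hν : 1 ≤ ν)
    (hunit : IsUnit (ψ.coeff ν)) (hnil : ∀ l : ℤ, l < ν → IsNilpotent (ψ.coeff l))
    (hreg : ∀ a : A, (ν : A) * a = 0 → a = 0)
    (φ : LaurentSeries A →ₐ[A] LaurentSeries A) (hcont : IsContMap ⇑φ)
    (hφt : φ (HahnSeries.single 1 1) = ψ) :
    Function.Injective ⇑φ :=
  substitution_injective' ψ hψ ν hunit hnil hreg φ hcont hφt
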